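/- Suppose the game with hint ⟨G, h, g, B, w_B⟩ is winning, where g(B) ≤ w_B ≤ h(B). Let G̃ be G plus a new vertex A joined only to B, with g(A) ≤ w_A ≤ h(A). If w_B·h(A) is divisible by h(B) and w_A·w_B ≥ (w_A − g(A))·h(B), then the game with hint ⟨G̃, h̃, g̃, A, w_A⟩ is winning. -/

import Mathlib

/-- Winning strategy in the hat guessing game with a hint: the adversary privately tells
sage `B` a number `x` such that `B`'s hat color lies in the set of `w` cyclically consecutive
colors `{x, x+1, …, x+w-1 mod h B}`. Strategies of sages other than `B` may not depend on the
hint. -/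
def HintWinning {V : Type*} (G : SimpleGraph V) (h g : V → ℕ) (B : V) (w : ℕ) : Prop :=
  ∃ σ : V → (V → ℕ) → ℕ → Finset ℕ,
    (∀ v, v ≠ B → ∀ c x x', σ v c x = σ v c x') ∧
    (∀ v c c' x, (∀ u, G.Adj v u → c u = c' u) → σ v c x = σ v c' x) ∧
    (∀ v c x, (σ v c x).card ≤ g v) ∧
    ∀ c : V → ℕ, (∀ v, c v < h v) →
      ∀ x : ℕ, (∃ k < w, c B = (x + k) % h B) → ∃ v, c v ∈ σ v c x

/-- The graph `G̃` obtained from `G` by appending a new vertex (`none`) joined only to `B`. -/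
def addLeaf {V : Type*} (G : SimpleGraph V) (B : V) : SimpleGraph (Option V) :=
  SimpleGraph.fromRel (fun x y =>
    (∃ u w : V, x = some u ∧ y = some w ∧ G.Adj u w) ∨ (x = none ∧ y = some B))


/-- Counting lemma: among `wA` consecutive hint windows of width `wB`
(starting at `(x+k)*wB mod hB`), the color `b` is covered at least `wA - gA` times. -/
lemma hint_aux (hA hB wA wB gA x b : ℕ) (hb : b < hB) (hwB : wB ≤ hB)
    (hdvd : hB ∣ wB * hA) (hineq : (wA - gA) * hB ≤ wA * wB)
    (P : ℕ → Prop) [DecidablePred P]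
    (hP : ∀ k j, j < wB → b = (((x + k) % hA) * wB + j) % hB → P k) :
    wA - gA ≤ ((Finset.range wA).filter P).card := by
  rcases le_or_gt wA gA with hle | hlt
  · simp [Nat.sub_eq_zero_of_le hle]
  have hB0 : 0 < hB := by omega
  have hwB0 : 0 < wB := by
    rcases Nat.eq_zero_or_pos wB with h0 | h
    · exfalso
      have h1 : 0 < (wA - gA) * hB := Nat.mul_pos (by omega) hB0
      rw [h0, Nat.mul_zero] at hineq
      omega
    · exact h
  set s := x * wB % hB with hsdef
  have hs : s < hB := Nat.mod_lt _ hB0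
  set r := (b + hB - s) % hB with hrdef
  have hrlt : r < hB := Nat.mod_lt _ hB0
  have hkey : (x * wB + r) % hB = b := by
    rw [Nat.add_mod, ← hsdef, Nat.mod_eq_of_lt hrlt]
    rcases le_or_gt s b with hsb | hsb
    · have hr' : r = b - s := by
        rw [hrdef, Nat.mod_eq_sub_mod (by omega),
          show b + hB - s - hB = b - s by omega]
        exact Nat.mod_eq_of_lt (by omega)
      rw [hr', show s + (b - s) = b by omega]
      exact Nat.mod_eq_of_lt hb
    · have hr' : r = b + hB - s := by
        rw [hrdef]; exact Nat.mod_eq_of_lt (by omega)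
      rw [hr', show s + (b + hB - s) = b + hB by omega, Nat.add_mod_right]
      exact Nat.mod_eq_of_lt hb
  have hmono : ∀ a b : ℕ, a < b → (r + a * hB) / wB < (r + b * hB) / wB := by
    intro a b hab
    have h1 : r + a * hB + wB ≤ r + b * hB := by
      have h2 : (a + 1) * hB ≤ b * hB := Nat.mul_le_mul_right _ (by omega)
      rw [Nat.add_mul, Nat.one_mul] at h2
      omega
    calc (r + a * hB) / wB < (r + a * hB) / wB + 1 := Nat.lt_succ_self _
      _ = (r + a * hB + wB) / wB := (Nat.add_div_right _ hwB0).symm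
      _ ≤ (r + b * hB) / wB := Nat.div_le_div_right h1
  calc wA - gA = (Finset.range (wA - gA)).card := (Finset.card_range _).symm
    _ ≤ ((Finset.range wA).filter P).card := by
        apply Finset.card_le_card_of_injOn (fun i => (r + i * hB) / wB)
        · intro i hi
          simp only [Finset.mem_coe, Finset.mem_range] at hi
          have hlt' : r + i * hB < wA * wB := by
            have h1 : r + i * hB < (i + 1) * hB := by
              rw [Nat.add_mul, Nat.one_mul]; omega
            have h2 : (i + 1) * hB ≤ (wA - gA) * hB :=
              Nat.mul_le_mul_right _ (by omega)
            omega
          have hfi : (r + i * hB) / wB < wA :=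
            (Nat.div_lt_iff_lt_mul hwB0).mpr hlt'
          refine Finset.mem_filter.mpr ⟨Finset.mem_range.mpr hfi, ?_⟩
          set t := r + i * hB with htdef
          set k := t / wB with hkdef
          set j := t % wB with hjdef
          have hj : j < wB := Nat.mod_lt _ hwB0
          apply hP k j hj
          obtain ⟨m, hm⟩ := hdvd
          have hmod : (((x + k) % hA) * wB + j) % hB = ((x + k) * wB + j) % hB := by
            conv_rhs => rw [show x + k = (x + k) % hA + hA * ((x + k) / hA) from
              (Nat.mod_add_div _ _).symm]
            rw [Nat.add_mul]
            rw [show hA * ((x + k) / hA) * wB = ((x + k) / hA * m) * hB by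
              calc hA * ((x + k) / hA) * wB = ((x + k) / hA) * (wB * hA) := by ring
                _ = ((x + k) / hA) * (hB * m) := by rw [hm]
                _ = ((x + k) / hA * m) * hB := by ring]
            rw [show (x + k) % hA * wB + ((x + k) / hA * m) * hB + j
                = ((x + k) % hA * wB + j) + ((x + k) / hA * m) * hB by ring,
              Nat.add_mul_mod_self_right]
          rw [hmod]
          have hdm : wB * k + j = t := Nat.div_add_mod t wB
          have hkt : (x + k) * wB + j = x * wB + t := by
            calc (x + k) * wB + j = x * wB + (wB * k + j) := by ring
              _ = x * wB + t := by rw [hdm]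
          rw [hkt, htdef, show x * wB + (r + i * hB) = (x * wB + r) + i * hB by ring,
            Nat.add_mul_mod_self_right, hkey]
        · intro i hi j hj hij
          by_contra hne
          rcases lt_trichotomy i j with h | h | h
          · exact absurd hij (Nat.ne_of_lt (hmono i j h))
          · exact hne h
          · exact absurd hij.symm (Nat.ne_of_lt (hmono j i h))

/-- transfer of a hint along a new edge. If the game with hint
`⟨G, h, g, B, w_B⟩` is winning, `g(B) ≤ w_B ≤ h(B)`, `g(A) ≤ w_A ≤ h(A)`, `h(B) ∣ w_B·h(A)`
and `w_A·w_B ≥ (w_A − g(A))·h(B)`, then the game with hint `⟨G̃, h̃, g̃, A, w_A⟩` is winning,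
where `G̃` is `G` plus a new vertex `A` joined only to `B`. -/
theorem hint_transfer {V : Type*} (G : SimpleGraph V) (h g : V → ℕ) (B : V)
    (hA gA wA wB : ℕ)
    (hwB₁ : g B ≤ wB) (hwB₂ : wB ≤ h B) (hwA₁ : gA ≤ wA) (hwA₂ : wA ≤ hA)
    (hdvd : h B ∣ wB * hA) (hineq : (wA - gA) * h B ≤ wA * wB)
    (hwin : HintWinning G h g B wB) :
    HintWinning (addLeaf G B) (fun x => x.elim hA h) (fun x => x.elim gA g) none wA := by
  classical
  obtain ⟨σ, hσhint, hσnbr, hσcard, hσwin⟩ := hwin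
  have hadj1 : (addLeaf G B).Adj none (some B) := by
    rw [addLeaf, SimpleGraph.fromRel_adj]
    exact ⟨by simp, Or.inl (Or.inr ⟨rfl, rfl⟩)⟩
  have hadj2 : (addLeaf G B).Adj (some B) none := hadj1.symm
  have hadj3 : ∀ u v : V, G.Adj u v → (addLeaf G B).Adj (some u) (some v) := by
    intro u v huv
    rw [addLeaf, SimpleGraph.fromRel_adj]
    exact ⟨by simpa using huv.ne, Or.inl (Or.inl ⟨u, v, rfl, rfl, huv⟩)⟩
  refine ⟨fun o c x => o.elim
      (let S := ((Finset.range wA).filter (fun k =>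
          ¬ ∃ j < wB, c (some B) = (((x + k) % hA) * wB + j) % h B)).image
          (fun k => (x + k) % hA);
        if S.card ≤ gA then S else ∅)
      (fun v => σ v (fun u => c (some u)) (c none * wB)), ?_, ?_, ?_, ?_⟩
  · rintro (_ | v) hv c x x'
    · exact absurd rfl hv
    · rfl
  · rintro (_ | v) c c' x hagree
    · have hBB : c (some B) = c' (some B) := hagree _ hadj1
      simp only [Option.elim, hBB]
    · show σ v (fun u => c (some u)) (c none * wB)
        = σ v (fun u => c' (some u)) (c' none * wB)
      have step1 : σ v (fun u => c (some u)) (c none * wB)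
          = σ v (fun u => c (some u)) (c' none * wB) := by
        by_cases hvB : v = B
        · subst hvB; rw [hagree none hadj2]
        · exact hσhint v hvB _ _ _
      rw [step1]
      exact hσnbr v _ _ _ (fun u hu => hagree (some u) (hadj3 v u hu))
  · rintro (_ | v) c x
    · dsimp only [Option.elim]
      split_ifs with hcond
      · exact hcond
      · simp
    · exact hσcard v _ _
  · intro c hc x hx
    obtain ⟨k, hk, hck⟩ := hx
    by_cases hcov : ∃ j < wB, c (some B) = (c none * wB + j) % h B
    · obtain ⟨v, hv⟩ := hσwin (fun u => c (some u)) (fun u => hc (some u))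
        (c none * wB) hcov
      exact ⟨some v, hv⟩
    · refine ⟨none, ?_⟩
      show c none ∈ (if _ then _ else _)
      have hbB : c (some B) < h B := hc (some B)
      have hgood := hint_aux hA (h B) wA wB gA x (c (some B)) hbB hwB₂ hdvd hineq
        (fun k => ∃ j < wB, c (some B) = (((x + k) % hA) * wB + j) % h B)
        (fun k j hj hb => ⟨j, hj, hb⟩)
      have hsum := Finset.card_filter_add_card_filter_not
        (s := Finset.range wA)
        (p := fun k => ∃ j < wB, c (some B) = (((x + k) % hA) * wB + j) % h B)
      rw [Finset.card_range] at hsum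
      have hle : (((Finset.range wA).filter (fun k =>
          ¬ ∃ j < wB, c (some B) = (((x + k) % hA) * wB + j) % h B)).image
          (fun k => (x + k) % hA)).card ≤ gA := by
        calc _ ≤ ((Finset.range wA).filter (fun k =>
            ¬ ∃ j < wB, c (some B) = (((x + k) % hA) * wB + j) % h B)).card :=
            Finset.card_image_le
          _ ≤ gA := by omega
      rw [if_pos hle]
      refine Finset.mem_image.mpr ⟨k, Finset.mem_filter.mpr
        ⟨Finset.mem_range.mpr hk, ?_⟩, hck.symm⟩
      have hck' : c none = (x + k) % hA := hck
      rw [← hck']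
      exact hcov
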